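/- Let (L,[·,·],α) be a Hom-Lie superalgebra and f: L → L an even linear map with fα = αf. Define x⋆'y = [x,f(y)]. Then (L, [·,·], ⋆', α) is a super Hom-Gel'fand-Dorfman bialgebra if and only if the following three conditions hold for all homogeneous x,y,z ∈ L: (i) [[x,f(y)] + [f(x),y], f(α(z))] − [α(x), f([y,f(z)])] + (−1)^{|x||y|}[α(y), f([x,f(z)])] = 0; (ii) [f(y),f(z)] ∈ Z(α(L)); (iii) [y,f(z)] + [f(y),z] − f([y,z]) ∈ Z(α(L)). -/
import Mathlib


noncomputable section

/-- The sign `(-1)^{|x||y|}` attached to parities `i, j` in `ℤ₂`. -/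
def sg (i j : ZMod 2) : ℂ := (-1 : ℂ) ^ (i.val * j.val)

variable {A : Type*} [AddCommGroup A] [Module ℂ A]

/-- `gr` makes `A` into a superspace: `A = A₀ ⊕ A₁`. -/
def IsSupergrading (gr : ZMod 2 → Submodule ℂ A) : Prop :=
  (∀ x : A, ∃ x0 ∈ gr 0, ∃ x1 ∈ gr 1, x = x0 + x1) ∧ (gr 0 ⊓ gr 1 = ⊥)

/-- An even linear map: it preserves the grading. -/
def EvenLin (gr : ZMod 2 → Submodule ℂ A) (α : A →ₗ[ℂ] A) : Prop :=
  ∀ i : ZMod 2, ∀ x ∈ gr i, α x ∈ gr i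

/-- An even bilinear map: it adds parities. -/
def EvenBilin (gr : ZMod 2 → Submodule ℂ A) (m : A →ₗ[ℂ] A →ₗ[ℂ] A) : Prop :=
  ∀ i j : ZMod 2, ∀ x ∈ gr i, ∀ y ∈ gr j, m x y ∈ gr (i + j)

/-- A Hom-Lie superalgebra structure on the superspace `(A, gr)`. -/
def HomLieSuper (gr : ZMod 2 → Submodule ℂ A) (br : A →ₗ[ℂ] A →ₗ[ℂ] A)
    (α : A →ₗ[ℂ] A) : Prop :=
  EvenLin gr α ∧ EvenBilin gr br ∧
  (∀ (i j : ZMod 2), ∀ x ∈ gr i, ∀ y ∈ gr j, br x y = -(sg i j • br y x)) ∧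
  (∀ (i j k : ZMod 2), ∀ x ∈ gr i, ∀ y ∈ gr j, ∀ z ∈ gr k,
    sg i k • br (br x y) (α z) + sg i j • br (br y z) (α x)
      + sg j k • br (br z x) (α y) = 0)

/-- A Hom-Novikov superalgebra structure on the superspace `(A, gr)`. -/
def HomNovikovSuper (gr : ZMod 2 → Submodule ℂ A) (c : A →ₗ[ℂ] A →ₗ[ℂ] A)
    (α : A →ₗ[ℂ] A) : Prop :=
  EvenLin gr α ∧ EvenBilin gr c ∧
  (∀ (i j k : ZMod 2), ∀ x ∈ gr i, ∀ y ∈ gr j, ∀ z ∈ gr k,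
    c (c x y) (α z) - c (α x) (c y z) = sg i j • (c (c y x) (α z) - c (α y) (c x z))) ∧
  (∀ (i j k : ZMod 2), ∀ x ∈ gr i, ∀ y ∈ gr j, ∀ z ∈ gr k,
    c (c x y) (α z) = sg j k • c (c x z) (α y))

/-- A super Hom-Gel'fand-Dorfman bialgebra structure on the superspace `(A, gr)`. -/
def SuperHomGD (gr : ZMod 2 → Submodule ℂ A) (br c : A →ₗ[ℂ] A →ₗ[ℂ] A)
    (α : A →ₗ[ℂ] A) : Prop :=
  HomLieSuper gr br α ∧ HomNovikovSuper gr c α ∧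
  (∀ (i j k : ZMod 2), ∀ x ∈ gr i, ∀ y ∈ gr j, ∀ z ∈ gr k,
    br (c x y) (α z) - sg j k • br (c x z) (α y) + c (br x y) (α z)
      - sg j k • c (br x z) (α y) - c (α x) (br y z) = 0)

/-- A Lie superalgebra structure on the superspace `(A, gr)`. -/
def LieSuper (gr : ZMod 2 → Submodule ℂ A) (br : A →ₗ[ℂ] A →ₗ[ℂ] A) : Prop :=
  EvenBilin gr br ∧
  (∀ (i j : ZMod 2), ∀ x ∈ gr i, ∀ y ∈ gr j, br x y = -(sg i j • br y x)) ∧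
  (∀ (i j k : ZMod 2), ∀ x ∈ gr i, ∀ y ∈ gr j, ∀ z ∈ gr k,
    sg i k • br (br x y) z + sg i j • br (br y z) x + sg j k • br (br z x) y = 0)

/-- A Novikov superalgebra structure on the superspace `(A, gr)`. -/
def NovikovSuper (gr : ZMod 2 → Submodule ℂ A) (c : A →ₗ[ℂ] A →ₗ[ℂ] A) : Prop :=
  EvenBilin gr c ∧
  (∀ (i j k : ZMod 2), ∀ x ∈ gr i, ∀ y ∈ gr j, ∀ z ∈ gr k,
    c (c x y) z - c x (c y z) = sg i j • (c (c y x) z - c y (c x z))) ∧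
  (∀ (i j k : ZMod 2), ∀ x ∈ gr i, ∀ y ∈ gr j, ∀ z ∈ gr k,
    c (c x y) z = sg j k • c (c x z) y)

/-- A super Gel'fand-Dorfman bialgebra structure on the superspace `(A, gr)`. -/
def SuperGD (gr : ZMod 2 → Submodule ℂ A) (br c : A →ₗ[ℂ] A →ₗ[ℂ] A) : Prop :=
  LieSuper gr br ∧ NovikovSuper gr c ∧
  (∀ (i j k : ZMod 2), ∀ x ∈ gr i, ∀ y ∈ gr j, ∀ z ∈ gr k,
    br (c x y) z - sg j k • br (c x z) y + c (br x y) z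
      - sg j k • c (br x z) y - c x (br y z) = 0)


lemma zm : ∀ i : ZMod 2, i = 0 ∨ i = 1 := by decide
lemma v1 : (1 : ZMod 2).val = 1 := rfl
lemma v2 : (2 : ZMod 2).val = 0 := rfl

/-- For a Hom-Lie superalgebra `(L, [·,·], α)` and an even linear map `f`
commuting with `α`, with `x⋆'y = [x, f(y)]`, the tuple `(L, [·,·], ⋆', α)` is a super
Hom-Gel'fand-Dorfman bialgebra iff for all homogeneous `x,y,z`:
(i) `[[x,f(y)]+[f(x),y], f(α(z))] − [α(x), f([y,f(z)])] + (−1)^{|x||y|}[α(y), f([x,f(z)])] = 0`,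
(ii) `[f(y),f(z)] ∈ Z(α(L))`, and (iii) `[y,f(z)] + [f(y),z] − f([y,z]) ∈ Z(α(L))`. -/
theorem superHomGD_star'_iff
    {L : Type*} [AddCommGroup L] [Module ℂ L]
    (gr : ZMod 2 → Submodule ℂ L) (hgr : IsSupergrading gr)
    (br : L →ₗ[ℂ] L →ₗ[ℂ] L) (α : L →ₗ[ℂ] L)
    (hL : HomLieSuper gr br α)
    (f : L →ₗ[ℂ] L) (hfeven : EvenLin gr f)
    (hfα : ∀ x : L, f (α x) = α (f x)) :
    SuperHomGD gr br (br.compl₂ f) α ↔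
      ((∀ (i j k : ZMod 2), ∀ x ∈ gr i, ∀ y ∈ gr j, ∀ z ∈ gr k,
          br (br x (f y) + br (f x) y) (f (α z)) - br (α x) (f (br y (f z)))
            + sg i j • br (α y) (f (br x (f z))) = 0) ∧
       (∀ (j k : ZMod 2), ∀ y ∈ gr j, ∀ z ∈ gr k, ∀ w : L,
          br (br (f y) (f z)) (α w) = 0) ∧
       (∀ (j k : ZMod 2), ∀ y ∈ gr j, ∀ z ∈ gr k, ∀ w : L,
          br (br y (f z) + br (f y) z - f (br y z)) (α w) = 0)) := by
  obtain ⟨hα, hbr, hskew, hjac⟩ := hL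
  have skew_lift : ∀ (p q : ZMod 2), ∀ a ∈ gr p, ∀ b ∈ gr q, ∀ w : L,
      br (br a b) w = -(sg p q • br (br b a) w) := by
    intro p q a ha b hb w
    rw [hskew p q a ha b hb]
    simp
  constructor
  · rintro ⟨-, ⟨-, -, hN1, hN2⟩, hGD⟩
    have hii : ∀ (i j k : ZMod 2), ∀ x ∈ gr i, ∀ y ∈ gr j, ∀ z ∈ gr k,
        br (br (f y) (f z)) (α x) = 0 := by
      intro i j k x hx y hy z hz
      have J := hjac i j k x hx (f y) (hfeven j y hy) (f z) (hfeven k z hz)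
      have SL := skew_lift k i (f z) (hfeven k z hz) x hx (α (f y))
      have N := hN2 i j k x hx y hy z hz
      simp only [LinearMap.compl₂_apply, hfα] at N
      linear_combination (norm := (match_scalars <;> (rcases zm i with rfl|rfl <;> rcases zm j with rfl|rfl <;> rcases zm k with rfl|rfl <;> norm_num [sg, v1, v2])))
        (sg i j : ℂ) • J - (sg i j * sg j k : ℂ) • SL - (sg i j * sg i k : ℂ) • N
    have hiii : ∀ (i j k : ZMod 2), ∀ x ∈ gr i, ∀ y ∈ gr j, ∀ z ∈ gr k,
        br (br y (f z) + br (f y) z - f (br y z)) (α x) = 0 := by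
      intro i j k x hx y hy z hz
      have J1 := hjac i j k x hx (f y) (hfeven j y hy) z hz
      have SL1 := skew_lift k i z hz x hx (α (f y))
      have J2 := hjac i j k x hx y hy (f z) (hfeven k z hz)
      have SL2 := skew_lift k i (f z) (hfeven k z hz) x hx (α y)
      have S3 := hskew i (j + k) (α x) (hα i x hx) (f (br y z))
        (hfeven (j + k) (br y z) (hbr j k y hy z hz))
      have GD := hGD i j k x hx y hy z hz
      simp only [LinearMap.compl₂_apply, hfα] at GD
      simp only [map_add, map_sub, LinearMap.add_apply, LinearMap.sub_apply]
      linear_combination (norm := (match_scalars <;> (rcases zm i with rfl|rfl <;> rcases zm j with rfl|rfl <;> rcases zm k with rfl|rfl <;> norm_num [sg, v1, v2])))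
        (sg i j : ℂ) • J1 - (sg i j * sg j k : ℂ) • SL1 + (sg i j : ℂ) • J2
          - (sg i j * sg j k : ℂ) • SL2 - (sg i j * sg i k : ℂ) • S3
          - (sg i j * sg i k : ℂ) • GD
    refine ⟨?_, ?_, ?_⟩
    · intro i j k x hx y hy z hz
      have N1 := hN1 i j k x hx y hy z hz
      simp only [LinearMap.compl₂_apply, hfα] at N1
      have SQ := skew_lift j i y hy (f x) (hfeven i x hx) (α (f z))
      simp only [map_add, LinearMap.add_apply, hfα]
      linear_combination (norm := (match_scalars <;> (rcases zm i with rfl|rfl <;> rcases zm j with rfl|rfl <;> rcases zm k with rfl|rfl <;> norm_num [sg, v1, v2])))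
        N1 + (sg i j : ℂ) • SQ
    · intro j k y hy z hz w
      obtain ⟨w0, h0, w1, h1, rfl⟩ := hgr.1 w
      simp only [map_add, LinearMap.map_add]
      rw [hii 0 j k w0 h0 y hy z hz, hii 1 j k w1 h1 y hy z hz, add_zero]
    · intro j k y hy z hz w
      obtain ⟨w0, h0, w1, h1, rfl⟩ := hgr.1 w
      simp only [map_add, LinearMap.map_add]
      rw [hiii 0 j k w0 h0 y hy z hz, hiii 1 j k w1 h1 y hy z hz, add_zero]
  · rintro ⟨hi, hii, hiii⟩
    refine ⟨⟨hα, hbr, hskew, hjac⟩, ⟨hα, ?_, ?_, ?_⟩, ?_⟩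
    · intro i j x hx y hy
      simpa only [LinearMap.compl₂_apply] using hbr i j x hx (f y) (hfeven j y hy)
    · -- Hom-Novikov left identity from (i)
      intro i j k x hx y hy z hz
      have Hi := hi i j k x hx y hy z hz
      simp only [map_add, LinearMap.add_apply, hfα] at Hi
      have SQ := skew_lift j i y hy (f x) (hfeven i x hx) (α (f z))
      simp only [LinearMap.compl₂_apply, hfα]
      linear_combination (norm := (match_scalars <;> (rcases zm i with rfl|rfl <;> rcases zm j with rfl|rfl <;> rcases zm k with rfl|rfl <;> norm_num [sg, v1, v2])))
        Hi - (sg i j : ℂ) • SQ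
    · -- Hom-Novikov right-commutativity from (ii)
      intro i j k x hx y hy z hz
      have J := hjac i j k x hx (f y) (hfeven j y hy) (f z) (hfeven k z hz)
      have SL := skew_lift k i (f z) (hfeven k z hz) x hx (α (f y))
      have H := hii j k y hy z hz x
      simp only [LinearMap.compl₂_apply, hfα]
      linear_combination (norm := (match_scalars <;> (rcases zm i with rfl|rfl <;> rcases zm j with rfl|rfl <;> rcases zm k with rfl|rfl <;> norm_num [sg, v1, v2])))
        (sg i k : ℂ) • J - (sg i k * sg j k : ℂ) • SL - (sg i k * sg i j : ℂ) • H
    · -- compatibility from (iii)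
      intro i j k x hx y hy z hz
      have J1 := hjac i j k x hx (f y) (hfeven j y hy) z hz
      have SL1 := skew_lift k i z hz x hx (α (f y))
      have J2 := hjac i j k x hx y hy (f z) (hfeven k z hz)
      have SL2 := skew_lift k i (f z) (hfeven k z hz) x hx (α y)
      have S3 := hskew i (j + k) (α x) (hα i x hx) (f (br y z))
        (hfeven (j + k) (br y z) (hbr j k y hy z hz))
      have H := hiii j k y hy z hz x
      simp only [map_add, map_sub, LinearMap.add_apply, LinearMap.sub_apply] at H
      simp only [LinearMap.compl₂_apply, hfα]
      linear_combination (norm := (match_scalars <;> (rcases zm i with rfl|rfl <;> rcases zm j with rfl|rfl <;> rcases zm k with rfl|rfl <;> norm_num [sg, v1, v2])))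
        (sg i k : ℂ) • J1 - (sg i k * sg j k : ℂ) • SL1 + (sg i k : ℂ) • J2
          - (sg i k * sg j k : ℂ) • SL2 - S3 - (sg i k * sg i j : ℂ) • H


end
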